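/- arXiv:1003.4024 — 4 statements merged into one kernel-verified Lean document; each statement's English description precedes it below -/
import Mathlib

section
/- Let X be a completely regular Hausdorff space and ε ∈ (0,1). The set-valued mapping Ψ_ε : P(X) → 2^{C(X)} defined by Ψ_ε(μ) = {K ∈ C(X) : μ(X \ K) < ε} is lower semi-continuous when C(X) carries the Vietoris topology; i.e., for every Vietoris-open U ⊆ C(X), the set {μ ∈ P(X) : Ψ_ε(μ) ∩ U ≠ ∅} is open in P(X). -/
open MeasureTheory Set TopologicalSpace
open scoped ENNReal NNReal
open unitInterval
open scoped BoundedContinuousFunction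


/-- The hyperspace of nonempty compact subsets of `X` (as a plain type). -/
def NEC (X : Type*) [TopologicalSpace X] : Type _ := {K : Set X // IsCompact K ∧ K.Nonempty}

/-- The upper Vietoris topology on the nonempty compact subsets, generated by the
sets `⟨V⟩ = {S : S ⊆ V}` for `V` open. -/
def upperVietoris (X : Type*) [TopologicalSpace X] : TopologicalSpace (NEC X) :=
  TopologicalSpace.generateFrom
    {s | ∃ V : Set X, IsOpen V ∧ s = {S : NEC X | S.1 ⊆ V}}

/-- The Vietoris topology on the nonempty compact subsets, generated by the subbasic
sets `{S : S ⊆ V}` and `{S : S ∩ V ≠ ∅}` for `V` open. -/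
def vietoris (X : Type*) [TopologicalSpace X] : TopologicalSpace (NEC X) :=
  TopologicalSpace.generateFrom
    ({s | ∃ V : Set X, IsOpen V ∧ s = {S : NEC X | S.1 ⊆ V}} ∪
     {s | ∃ V : Set X, IsOpen V ∧ s = {S : NEC X | (S.1 ∩ V).Nonempty}})

/-- The space of Radon probability measures on `X`: Borel probability measures that are
inner regular with respect to compact sets, topologized as a subspace of the space of
probability measures with the weak topology. -/
def RadonP (X : Type*) [TopologicalSpace X] [MeasurableSpace X] [OpensMeasurableSpace X] :
    Type _ :=
  {μ : ProbabilityMeasure X // (μ : Measure X).InnerRegular}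

noncomputable instance {X : Type*} [TopologicalSpace X] [MeasurableSpace X]
    [OpensMeasurableSpace X] : TopologicalSpace (RadonP X) :=
  instTopologicalSpaceSubtype

lemma enn_helper {a b : ℝ≥0∞} (ha : a ≤ 1) (hb : b ≤ 1) :
    1 - a < b ↔ 1 - b < a := by
  constructor <;> intro h
  · exact ENNReal.sub_lt_of_lt_add hb
      (by simpa [add_comm] using ENNReal.lt_add_of_sub_lt_left (Or.inl ENNReal.one_ne_top) h)
  · exact ENNReal.sub_lt_of_lt_add ha
      (by simpa [add_comm] using ENNReal.lt_add_of_sub_lt_left (Or.inl ENNReal.one_ne_top) h)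

lemma urysohn_cr {X : Type*} [TopologicalSpace X] [CompletelyRegularSpace X]
    {C G : Set X} (hC : IsCompact C) (hG : IsOpen G) (hCG : C ⊆ G) :
    ∃ h : X →ᵇ ℝ≥0, (∀ x, h x ≤ 1) ∧ (∀ x ∈ C, h x = 1) ∧ (∀ x, x ∉ G → h x = 0) := by
  rcases C.eq_empty_or_nonempty with rfl | hCne
  · exact ⟨0, fun x => zero_le_one, fun x hx => hx.elim, fun x _ => rfl⟩
  have hsep : ∀ i : C, ∃ f : X → I, Continuous f ∧ f i = 0 ∧ EqOn f 1 Gᶜ := fun i =>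
    CompletelyRegularSpace.completely_regular i.1 Gᶜ hG.isClosed_compl
      (fun hc => hc (hCG i.2))
  choose F hFc hF0 hF1 using hsep
  set W : C → Set X := fun i => {z | (F i z : ℝ) < 1/2} with hW
  have hWc : ∀ i, Continuous fun z => (F i z : ℝ) := fun i =>
    continuous_subtype_val.comp (hFc i)
  have hWopen : ∀ i, IsOpen (W i) := fun i => isOpen_lt (hWc i) continuous_const
  have hcover : C ⊆ ⋃ i, W i := fun x hx => mem_iUnion.2 ⟨⟨x, hx⟩, by
    simp only [hW, mem_setOf_eq, hF0 ⟨x, hx⟩]; norm_num⟩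
  obtain ⟨t, ht⟩ := hC.elim_finite_subcover W hWopen hcover
  obtain ⟨x0, hx0⟩ := hCne
  obtain ⟨i0, hi0t, _⟩ := mem_iUnion₂.1 (ht hx0)
  have htne : t.Nonempty := ⟨i0, hi0t⟩
  set g : X → ℝ := fun z => t.inf' htne fun i => (F i z : ℝ) with hg
  have hgc : Continuous g := continuous_iff_continuousAt.2 fun z =>
    ContinuousAt.finset_inf'_apply htne fun i _ => (hWc i).continuousAt
  have hg0 : ∀ z, 0 ≤ g z := fun z => Finset.le_inf' htne _ fun i _ => (F i z).2.1
  have hg1 : ∀ z, g z ≤ 1 := fun z =>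
    le_trans (Finset.inf'_le _ hi0t) (F i0 z).2.2
  set hr : X → ℝ := fun z => min 1 (2 - 2 * g z) with hhr
  have hr0 : ∀ z, 0 ≤ hr z := fun z => le_min one_pos.le (by nlinarith [hg1 z])
  have hr1 : ∀ z, hr z ≤ 1 := fun z => min_le_left _ _
  have hrc : Continuous hr := continuous_const.min
    (continuous_const.sub (continuous_const.mul hgc))
  have hrC : ∀ z ∈ C, hr z = 1 := by
    intro z hz
    obtain ⟨i, hit, hiz⟩ := mem_iUnion₂.1 (ht hz)
    have : g z < 1/2 := lt_of_le_of_lt (Finset.inf'_le _ hit) hiz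
    exact min_eq_left (by linarith)
  have hrG : ∀ z, z ∉ G → hr z = 0 := by
    intro z hz
    have hall : ∀ i ∈ t, (F i z : ℝ) = 1 := fun i _ => by
      have := hF1 i (by simpa using hz); rw [this]; rfl
    have : g z = 1 := le_antisymm
      ((Finset.inf'_le (fun i => ((F i z : ℝ))) hi0t).trans (hall i0 hi0t).le)
      (Finset.le_inf' htne _ fun i hi => (hall i hi).ge)
    simp [hhr, this]
  refine ⟨⟨⟨fun z => ⟨hr z, hr0 z⟩, hrc.subtype_mk _⟩, 1, fun x y => ?_⟩, ?_, ?_, ?_⟩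
  · rw [NNReal.dist_eq]
    simp only [ContinuousMap.coe_mk, NNReal.coe_mk]
    change |hr x - hr y| ≤ 1; rw [abs_sub_le_iff]; constructor <;> nlinarith [hr0 x, hr1 x, hr0 y, hr1 y]
  · intro x
    show (⟨hr x, hr0 x⟩ : ℝ≥0) ≤ 1
    exact (by exact_mod_cast hr1 x)
  · intro x hx
    exact NNReal.coe_injective (show (hr x : ℝ) = ((1:ℝ≥0):ℝ) by rw [NNReal.coe_one]; exact hrC x hx)
  · intro x hx
    exact NNReal.coe_injective (show (hr x : ℝ) = ((0:ℝ≥0):ℝ) by rw [NNReal.coe_zero]; exact hrG x hx)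

theorem stmt3 {X : Type*} [TopologicalSpace X] [CompletelyRegularSpace X] [T2Space X]
    [MeasurableSpace X] [BorelSpace X] (ε : ℝ≥0∞) (h0 : 0 < ε) (h1 : ε < 1)
    (U : Set (NEC X)) (hU : @IsOpen _ (vietoris X) U) :
    IsOpen {μ : RadonP X | ∃ K ∈ U, (μ.1 : Measure X) K.1ᶜ < ε} := by
  classical
  letI : TopologicalSpace (NEC X) := vietoris X
  rw [isOpen_iff_forall_mem_open]
  rintro μ ⟨K, hKU, hKε⟩
  -- extract a basic neighborhood of K inside U
  have hbasis := TopologicalSpace.isTopologicalBasis_of_subbasis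
    (t := vietoris X) (s := ({s | ∃ V : Set X, IsOpen V ∧ s = {S : NEC X | S.1 ⊆ V}} ∪
     {s | ∃ V : Set X, IsOpen V ∧ s = {S : NEC X | (S.1 ∩ V).Nonempty}})) rfl
  obtain ⟨B, hBb, hKB, hBU⟩ := hbasis.exists_subset_of_mem_open hKU hU
  obtain ⟨f, ⟨hf_fin, hf_sub⟩, rfl⟩ := hBb
  -- the open set G collecting all the "upper" constraints
  set gg : Set (NEC X) → Set X := fun s =>
    if hs : ∃ V, IsOpen V ∧ s = {S : NEC X | S.1 ⊆ V} then hs.choose else univ with hgg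
  have hggopen : ∀ s, IsOpen (gg s) := by
    intro s
    by_cases hs : ∃ V, IsOpen V ∧ s = {S : NEC X | S.1 ⊆ V}
    · simpa [hgg, hs] using hs.choose_spec.1
    · simp [hgg, hs]
  set G : Set X := ⋂ s ∈ f, gg s with hG
  have hGopen : IsOpen G := hf_fin.isOpen_biInter fun s _ => hggopen s
  have hKG : K.1 ⊆ G := by
    refine subset_iInter₂ fun s hs => ?_
    by_cases hus : ∃ V, IsOpen V ∧ s = {S : NEC X | S.1 ⊆ V}
    · have hKs : K ∈ s := hKB s hs
      rw [hus.choose_spec.2] at hKs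
      simpa [hgg, hus] using hKs
    · simp [hgg, hus]
  -- a Urysohn function for K.1 ⊆ G
  obtain ⟨h, hle1, hK1, hG0⟩ := urysohn_cr K.2.1 hGopen hKG
  -- the neighborhood of μ
  set c : ℝ≥0 := (1 - ε).toNNReal with hc
  refine ⟨(fun ν : RadonP X => ν.1.toFiniteMeasure.testAgainstNN h) ⁻¹' Ioi c, ?_, ?_, ?_⟩
  · -- this neighborhood is contained in the target set
    rintro ν (hν : c < ν.1.toFiniteMeasure.testAgainstNN h)
    have hint_le : (∫⁻ x, (h x : ℝ≥0∞) ∂(ν.1 : Measure X)) ≤ (ν.1 : Measure X) G := by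
      rw [← lintegral_indicator_one hGopen.measurableSet]
      refine lintegral_mono fun z => ?_
      by_cases hz : z ∈ G
      · simp only [indicator_of_mem hz, Pi.one_apply]
        exact ENNReal.coe_le_one_iff.mpr (hle1 z)
      · simp [indicator_of_notMem hz, hG0 z hz]
    have hfin : (∫⁻ x, (h x : ℝ≥0∞) ∂(ν.1 : Measure X)) ≠ ⊤ :=
      (lt_of_le_of_lt hint_le (measure_lt_top _ _)).ne
    have hgt : (1 - ε : ℝ≥0∞) < (ν.1 : Measure X) G := by
      have := (ENNReal.toNNReal_lt_toNNReal (by simp) hfin).mp hν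
      exact lt_of_lt_of_le this hint_le
    -- inner regularity : compact C inside G with large measure
    obtain ⟨C, hCG, hCcomp, hCmeas⟩ :=
      ν.2.innerRegular hGopen.measurableSet (1 - ε) hgt
    have hCsub : C ⊆ G := hCG
    refine ⟨⟨K.1 ∪ C, K.2.1.union hCcomp, K.2.2.inl⟩, hBU ?_, ?_⟩
    · -- K ∪ C belongs to every member of f
      intro s hs
      by_cases hus : ∃ V, IsOpen V ∧ s = {S : NEC X | S.1 ⊆ V}
      · rw [hus.choose_spec.2]
        have hGsub : G ⊆ gg s := biInter_subset_of_mem hs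
        have : gg s = hus.choose := by simp [hgg, hus]
        exact union_subset (hKG.trans (this ▸ hGsub)) (hCsub.trans (this ▸ hGsub))
      · rcases hf_sub hs with hmem | ⟨V, hVopen, rfl⟩
        · exact absurd hmem hus
        · have hKs : K ∈ {S : NEC X | (S.1 ∩ V).Nonempty} := hKB _ hs
          exact hKs.mono (inter_subset_inter_left _ subset_union_left)
    · -- small measure of the complement
      have hcompl : (ν.1 : Measure X) (K.1 ∪ C)ᶜ ≤ (ν.1 : Measure X) Cᶜ :=
        measure_mono (compl_subset_compl.mpr subset_union_right)
      have hCm : MeasurableSet C := hCcomp.isClosed.measurableSet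
      have : (ν.1 : Measure X) Cᶜ < ε := by
        rw [prob_compl_eq_one_sub hCm]
        exact (enn_helper (prob_le_one) h1.le).mpr hCmeas
      exact lt_of_le_of_lt hcompl this
  · -- openness
    exact (isOpen_Ioi.preimage ((ProbabilityMeasure.continuous_testAgainstNN_eval h).comp
      continuous_subtype_val))
  · -- μ belongs to the neighborhood
    show c < μ.1.toFiniteMeasure.testAgainstNN h
    have hmeasK : MeasurableSet K.1 := K.2.1.isClosed.measurableSet
    have hint_ge : (μ.1 : Measure X) K.1 ≤ ∫⁻ x, (h x : ℝ≥0∞) ∂(μ.1 : Measure X) := by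
      rw [← lintegral_indicator_one hmeasK]
      refine lintegral_mono fun z => ?_
      by_cases hz : z ∈ K.1
      · simp [indicator_of_mem hz, hK1 z hz]
      · simp [indicator_of_notMem hz]
    have hKbig : (1 - ε : ℝ≥0∞) < (μ.1 : Measure X) K.1 := by
      refine (enn_helper prob_le_one h1.le).mp ?_
      rwa [← prob_compl_eq_one_sub hmeasK]
    have hfin : (∫⁻ x, (h x : ℝ≥0∞) ∂(μ.1 : Measure X)) ≠ ⊤ := by
      refine (lt_of_le_of_lt (lintegral_mono fun z => ?_) (by simp [lintegral_one] :
        (∫⁻ _, (1:ℝ≥0∞) ∂(μ.1 : Measure X)) < ⊤)).ne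
      exact ENNReal.coe_le_one_iff.mpr (hle1 z)
    exact (ENNReal.toNNReal_lt_toNNReal (by simp) hfin).mpr (lt_of_lt_of_le hKbig hint_ge)
end

section
/- Let X be a completely regular Hausdorff space, ε ∈ (0,1), μ a Radon probability measure on X, K a nonempty compact subset of X, and suppose K lies in the closure, with respect to the upper Vietoris topology on C(X), of the set {H ∈ C(X) : μ(X \ H) < ε}. Then μ(X \ K) ≤ ε. -/
open MeasureTheory Set TopologicalSpace
open scoped ENNReal NNReal

theorem stmt4 {X : Type*} [TopologicalSpace X] [CompletelyRegularSpace X] [T2Space X]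
    [MeasurableSpace X] [BorelSpace X] (μ : Measure X) [IsProbabilityMeasure μ]
    (hμ : μ.InnerRegular) (ε : ℝ≥0∞) (h0 : 0 < ε) (h1 : ε < 1) (K : NEC X)
    (hK : K ∈ @closure _ (upperVietoris X) {H : NEC X | μ H.1ᶜ < ε}) :
    μ K.1ᶜ ≤ ε := by
  by_contra h
  push_neg at h
  have hKc : MeasurableSet K.1ᶜ := (K.2.1.isClosed.measurableSet).compl
  obtain ⟨C, hCsub, hCcomp, hCε⟩ := hμ.innerRegular hKc ε h
  have hVopen : IsOpen Cᶜ := hCcomp.isClosed.isOpen_compl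
  have hOopen : @IsOpen (NEC X) (upperVietoris X) {S : NEC X | S.1 ⊆ Cᶜ} :=
    TopologicalSpace.isOpen_generateFrom_of_mem ⟨Cᶜ, hVopen, rfl⟩
  have hKO : K ∈ {S : NEC X | S.1 ⊆ Cᶜ} := by
    intro x hx
    exact fun hxC => hCsub hxC hx
  letI := upperVietoris X
  obtain ⟨H, hH1, hH2⟩ := mem_closure_iff.1 hK _ hOopen hKO
  have : C ⊆ H.1ᶜ := fun x hx hxH => hH1 hxH hx
  exact absurd (lt_of_lt_of_le hCε ((measure_mono this).trans hH2.le)) (lt_irrefl _)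
end

section
/- Let X be a completely metrizable space and Z ⊆ P(X) a paracompact subspace of the space of Radon probability measures on X with the weak topology. Then for every ε > 0 there exists an usco mapping φ : Z → C(X) (nonempty compact values, upper semi-continuous) such that μ(X \ φ(μ)) < ε for every μ ∈ Z. -/
open MeasureTheory Set TopologicalSpace
open scoped ENNReal NNReal

open Filter Topology

lemma lsc_open {Ω : Type*} [MeasurableSpace Ω] [PseudoEMetricSpace Ω] [OpensMeasurableSpace Ω]
    [HasOuterApproxClosed Ω] {G : Set Ω} (hG : IsOpen G) (c : ℝ≥0∞) :
    IsOpen {ν : ProbabilityMeasure Ω | c < (ν : Measure Ω) G} := by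
  rw [isOpen_iff_mem_nhds]
  intro ν hν
  have h := ProbabilityMeasure.le_liminf_measure_open_of_tendsto
    (L := 𝓝 ν) (μs := id) tendsto_id hG
  exact eventually_lt_of_lt_liminf (lt_of_lt_of_le hν h)

lemma aux_sub_lt {a d : ℝ≥0∞} (ha : a ≤ 1) (h : 1 - d < a) : 1 - a < d := by
  by_contra hc
  push_neg at hc
  have h1 : a ≤ 1 - d :=
    calc a = 1 - (1 - a) := (ENNReal.sub_sub_cancel ENNReal.one_ne_top ha).symm
    _ ≤ 1 - d := tsub_le_tsub_left hc 1
  exact absurd (h.trans_le h1) (lt_irrefl _)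

theorem stmt8 {X : Type*} [MetricSpace X] [CompleteSpace X] [MeasurableSpace X]
    [BorelSpace X] (Z : Set (RadonP X)) (hZ : ParacompactSpace Z)
    (ε : ℝ≥0∞) (hε : 0 < ε) :
    ∃ φ : Z → NEC X, (∀ U : Set X, IsOpen U → IsOpen {μ : Z | (φ μ).1 ⊆ U}) ∧
      ∀ μ : Z, ((μ : RadonP X).1 : Measure X) (φ μ).1ᶜ < ε := by
  classical
  set m : Z → Measure X := fun ν => ((ν : RadonP X).1 : Measure X) with hm
  have hmprob : ∀ ν : Z, IsProbabilityMeasure (m ν) := fun ν => (ν : RadonP X).1.2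
  -- the tolerance δ
  set δ : ℝ≥0∞ := min ε 1 / 2 with hδ
  have hδ0 : 0 < δ := ENNReal.div_pos (lt_min hε one_pos).ne' ENNReal.ofNat_ne_top
  have hδ1 : δ < 1 := by
    calc δ ≤ 1 / 2 := ENNReal.div_le_div_right (min_le_right _ _) 2
    _ < 1 := ENNReal.half_lt_self one_ne_zero ENNReal.one_ne_top
  have hδε : δ < ε := by
    rcases le_total ε 1 with h | h
    · have hh : δ = ε / 2 := by rw [hδ, min_eq_left h]
      rw [hh]
      exact ENNReal.half_lt_self hε.ne' (ne_top_of_le_ne_top ENNReal.one_ne_top h)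
    · exact lt_of_lt_of_le hδ1 h
  -- the sequence of tolerances
  set d : ℕ → ℝ≥0∞ := fun n => δ * 2⁻¹ ^ (n + 1) with hd
  have hd0 : ∀ n, 0 < d n := fun n =>
    ENNReal.mul_pos hδ0.ne' (pow_ne_zero _ (ENNReal.inv_ne_zero.2 ENNReal.ofNat_ne_top))
  have hdsum : ∑' n, d n = δ := by
    rw [hd]
    rw [ENNReal.tsum_mul_left]
    have h2 : ∑' n : ℕ, (2⁻¹ : ℝ≥0∞) ^ (n + 1) = 1 := by
      have : ∀ n : ℕ, (2⁻¹ : ℝ≥0∞) ^ (n + 1) = 2⁻¹ ^ n * 2⁻¹ := fun n => pow_succ _ _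
      rw [tsum_congr this, ENNReal.tsum_mul_right, ENNReal.tsum_geometric]
      rw [ENNReal.one_sub_inv_two, inv_inv]
      exact ENNReal.mul_inv_cancel two_ne_zero ENNReal.ofNat_ne_top
    rw [h2, mul_one]
  -- the radii
  set ρ : ℕ → ℝ := fun n => (1 / 2) ^ n with hρdef
  have hρ : ∀ n, 0 < ρ n := fun n => pow_pos (by norm_num) n
  -- the evaluation map
  set e : Z → ProbabilityMeasure X := fun ν => (ν : RadonP X).1 with he_def
  have he : Continuous e := by exact continuous_subtype_val.comp continuous_subtype_val
  -- key: finite ball covers of large measure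
  have key : ∀ (n : ℕ) (j : Z), ∃ s : Finset X,
      1 - d n < m j (⋃ x ∈ s, Metric.ball x (ρ n)) := by
    intro n j
    haveI := hmprob j
    have h1 : (1 : ℝ≥0∞) - d n < m j univ := by
      rw [measure_univ]
      exact ENNReal.sub_lt_self ENNReal.one_ne_top one_ne_zero (hd0 n).ne'
    obtain ⟨K, -, hKc, hKm⟩ := (j : RadonP X).2.innerRegular MeasurableSet.univ _ h1
    obtain ⟨t, -, htf, htsub⟩ := hKc.finite_cover_balls (hρ n)
    refine ⟨htf.toFinset, hKm.trans_le (measure_mono (htsub.trans ?_))⟩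
    intro x hx
    simp only [mem_iUnion] at hx ⊢
    obtain ⟨y, hy, hxy⟩ := hx
    exact ⟨y, htf.mem_toFinset.2 hy, hxy⟩
  choose S hS using key
  set G : ℕ → Z → Set X := fun n j => ⋃ x ∈ S n j, Metric.ball x (ρ n) with hG
  set T : ℕ → Z → Set X := fun n j => ⋃ x ∈ S n j, Metric.closedBall x (ρ n) with hT
  have hGopen : ∀ n j, IsOpen (G n j) := fun n j =>
    isOpen_biUnion fun x _ => Metric.isOpen_ball
  have hGT : ∀ n j, G n j ⊆ T n j := fun n j =>
    iUnion₂_mono fun x _ => Metric.ball_subset_closedBall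
  have hTclosed : ∀ n j, IsClosed (T n j) := fun n j =>
    (S n j).finite_toSet.isClosed_biUnion fun x _ => Metric.isClosed_closedBall
  -- the open cover
  set O : ℕ → Z → Set Z := fun n j => {ν | 1 - d n < m ν (G n j)} with hO
  have hOopen : ∀ n j, IsOpen (O n j) := by
    intro n j
    exact (lsc_open (hGopen n j) (1 - d n)).preimage he
  have hOcover : ∀ n, ⋃ j, O n j = univ := fun n =>
    eq_univ_iff_forall.2 fun ν => mem_iUnion.2 ⟨ν, hS n ν⟩
  -- locally finite refinements
  have href : ∀ n, ∃ V : Z → Set Z, (∀ j, IsOpen (V j)) ∧ (⋃ j, V j = univ) ∧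
      LocallyFinite V ∧ ∀ j, V j ⊆ O n j := fun n =>
    precise_refinement (O n) (hOopen n) (hOcover n)
  choose V hVopen hVcover hVlf hVsub using href
  -- the closed approximants
  set D : ℕ → Z → Set X := fun n ν => ⋃ j ∈ {j | ν ∈ closure (V n j)}, T n j with hD
  have hJfin : ∀ n ν, {j | ν ∈ closure (V n j)}.Finite := fun n ν =>
    ((hVlf n).closure).point_finite ν
  have hDclosed : ∀ n ν, IsClosed (D n ν) := fun n ν =>
    (hJfin n ν).isClosed_biUnion fun j _ => hTclosed n j
  have hDm : ∀ n (ν : Z), 1 - d n < m ν (D n ν) := by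
    intro n ν
    have hmem : ν ∈ ⋃ j, V n j := by rw [hVcover n]; trivial
    obtain ⟨j, hj⟩ := mem_iUnion.1 hmem
    have h1 : G n j ⊆ D n ν :=
      (hGT n j).trans (subset_biUnion_of_mem (show ν ∈ closure (V n j) from subset_closure hj))
    exact (hVsub n j hj).trans_le (measure_mono h1)
  have hDcompl : ∀ n (ν : Z), m ν (D n ν)ᶜ < d n := by
    intro n ν
    haveI := hmprob ν
    rw [measure_compl (hDclosed n ν).measurableSet (measure_ne_top _ _), measure_univ]
    exact aux_sub_lt prob_le_one (hDm n ν)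
  -- the value of φ
  set C : Z → Set X := fun ν => ⋂ n, D n ν with hC
  have hCclosed : ∀ ν, IsClosed (C ν) := fun ν => isClosed_iInter fun n => hDclosed n ν
  have hCco : ∀ ν, m ν (C ν)ᶜ ≤ δ := by
    intro ν
    have h1 : (C ν)ᶜ = ⋃ n, (D n ν)ᶜ := by rw [hC, compl_iInter]
    rw [h1]
    calc m ν (⋃ n, (D n ν)ᶜ) ≤ ∑' n, m ν (D n ν)ᶜ := measure_iUnion_le _
    _ ≤ ∑' n, d n := ENNReal.tsum_le_tsum fun n => (hDcompl n ν).le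
    _ = δ := hdsum
  have hCne : ∀ ν, (C ν).Nonempty := by
    intro ν
    rw [nonempty_iff_ne_empty]
    intro hh
    haveI := hmprob ν
    have h2 := hCco ν
    rw [hh, compl_empty, measure_univ] at h2
    exact absurd (lt_of_le_of_lt h2 hδ1) (lt_irrefl _)
  have hcentfin : ∀ n ν, (⋃ j ∈ {j | ν ∈ closure (V n j)}, ((S n j : Set X))).Finite :=
    fun n ν => (hJfin n ν).biUnion fun j _ => (S n j).finite_toSet
  have hDball : ∀ n (ν : Z) (x : X), x ∈ D n ν →
      ∃ y ∈ ⋃ j ∈ {j | ν ∈ closure (V n j)}, ((S n j : Set X)), x ∈ Metric.closedBall y (ρ n) := by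
    intro n ν x hx
    obtain ⟨j, hj, hxT⟩ := mem_iUnion₂.1 hx
    obtain ⟨y, hy, hxy⟩ := mem_iUnion₂.1 hxT
    exact ⟨y, mem_iUnion₂.2 ⟨j, hj, hy⟩, hxy⟩
  have hρsmall : ∀ ε' : ℝ, 0 < ε' → ∃ n, ρ n < ε' := by
    intro ε' hε'
    exact exists_pow_lt_of_lt_one hε' (by norm_num)
  have hCtb : ∀ ν, TotallyBounded (C ν) := by
    intro ν
    rw [Metric.totallyBounded_iff]
    intro ε' hε'
    obtain ⟨n, hn⟩ := hρsmall ε' hε'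
    refine ⟨_, hcentfin n ν, ?_⟩
    intro x hx
    have hx' : x ∈ D n ν := mem_iInter.1 hx n
    obtain ⟨y, hy, hxy⟩ := hDball n ν x hx'
    exact mem_biUnion hy (Metric.closedBall_subset_ball hn hxy)
  have hCcpt : ∀ ν, IsCompact (C ν) := fun ν =>
    TotallyBounded.isCompact_of_isClosed (hCtb ν) (hCclosed ν)
  refine ⟨fun ν => ⟨C ν, hCcpt ν, hCne ν⟩, ?_, fun ν => lt_of_le_of_lt (hCco ν) hδε⟩
  -- upper semicontinuity
  intro U hU
  rw [isOpen_iff_mem_nhds]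
  intro ν0 hν0
  have hν0' : C ν0 ⊆ U := hν0
  -- step 1: a finite stage N with ⋂_{k<N} D k ν0 ⊆ U
  set E : ℕ → Set X := fun N => (⋂ k ∈ Finset.range N, D k ν0) ∩ Uᶜ with hE
  have hEdec : ∀ N, E (N + 1) ⊆ E N := by
    intro N
    apply inter_subset_inter_left
    intro x hx
    rw [mem_iInter₂] at hx ⊢
    intro k hk
    exact hx k (Finset.mem_range.2 ((Finset.mem_range.1 hk).trans (Nat.lt_succ_self N)))
  have hEanti : Antitone E := antitone_nat_of_succ_le hEdec
  have hEclosed : ∀ N, IsClosed (E N) :=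
    fun N => (isClosed_biInter fun k _ => hDclosed k ν0).inter hU.isClosed_compl
  have hEempty : ∃ N, E N = ∅ := by
    by_contra hc
    push_neg at hc
    have hne : ∀ N, (E N).Nonempty := hc
    choose x hx using hne
    have hxD : ∀ n N, n < N → x N ∈ D n ν0 := by
      intro n N hnN
      have h1 : x N ∈ E N := hx N
      have h2 := h1.1
      rw [mem_iInter₂] at h2
      exact h2 n (Finset.mem_range.2 hnN)
    have htb : TotallyBounded (range x) := by
      rw [Metric.totallyBounded_iff]
      intro ε' hε'
      obtain ⟨n, hn⟩ := hρsmall ε' hε'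
      refine ⟨(⋃ j ∈ {j | ν0 ∈ closure (V n j)}, ((S n j : Set X))) ∪ (x '' Iic n),
        (hcentfin n ν0).union ((finite_Iic n).image x), ?_⟩
      rintro _ ⟨N, rfl⟩
      rcases le_or_gt N n with hNn | hNn
      · exact mem_biUnion (Or.inr ⟨N, hNn, rfl⟩) (Metric.mem_ball_self hε')
      · obtain ⟨y, hy, hxy⟩ := hDball n ν0 (x N) (hxD n N hNn)
        exact mem_biUnion (Or.inl hy) (Metric.closedBall_subset_ball hn hxy)
    have hA : IsCompact (closure (range x)) :=
      TotallyBounded.isCompact_of_isClosed htb.closure isClosed_closure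
    have hnonempty2 : ∀ N, (E N ∩ closure (range x)).Nonempty :=
      fun N => ⟨x N, hx N, subset_closure ⟨N, rfl⟩⟩
    obtain ⟨y, hy⟩ := IsCompact.nonempty_iInter_of_sequence_nonempty_isCompact_isClosed
      (fun N => E N ∩ closure (range x))
      (fun N => inter_subset_inter_left _ (hEdec N))
      hnonempty2
      (hA.of_isClosed_subset ((hEclosed 0).inter isClosed_closure) inter_subset_right)
      (fun N => (hEclosed N).inter isClosed_closure)
    have hyE : ∀ N, y ∈ E N := fun N => (mem_iInter.1 hy N).1
    have hyC : y ∈ C ν0 := by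
      rw [hC]
      refine mem_iInter.2 fun k => ?_
      have h1 := (hyE (k + 1)).1
      rw [mem_iInter₂] at h1
      exact h1 k (Finset.mem_range.2 (Nat.lt_succ_self k))
    exact (hyE 0).2 (hν0' hyC)
  obtain ⟨N, hEN⟩ := hEempty
  have hNsub : (⋂ k ∈ Finset.range N, D k ν0) ⊆ U := by
    intro z hz
    by_contra hzU
    have : z ∈ E N := ⟨hz, hzU⟩
    rw [hEN] at this
    exact this
  -- step 2: the neighborhood
  choose W hWnhds hWfin using fun k => hVlf k ν0
  set Bad : ℕ → Set Z := fun k =>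
    ⋃ j ∈ {j | (V k j ∩ W k).Nonempty ∧ ν0 ∉ closure (V k j)}, closure (V k j) with hBad
  have hBadclosed : ∀ k, IsClosed (Bad k) := fun k =>
    Set.Finite.isClosed_biUnion ((hWfin k).subset fun j hj => hj.1)
      fun j _ => isClosed_closure
  have hBadν0 : ∀ k, ν0 ∉ Bad k := by
    intro k hk
    obtain ⟨j, hj, hmem⟩ := mem_iUnion₂.1 hk
    exact hj.2 hmem
  set WW : Set Z := ⋂ k ∈ Finset.range N, (interior (W k) \ Bad k) with hWW
  have hWWopen : IsOpen WW :=
    isOpen_biInter_finset fun k _ => isOpen_interior.sdiff (hBadclosed k)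
  have hWWmem : ν0 ∈ WW :=
    mem_iInter₂.2 fun k _ => ⟨mem_interior_iff_mem_nhds.2 (hWnhds k), hBadν0 k⟩
  refine Filter.mem_of_superset (hWWopen.mem_nhds hWWmem) ?_
  intro ν hνW
  show C ν ⊆ U
  have hDsub : ∀ k, k ∈ Finset.range N → D k ν ⊆ D k ν0 := by
    intro k hk z hz
    obtain ⟨j, hj, hzT⟩ := mem_iUnion₂.1 hz
    have hν_mem : ν ∈ interior (W k) \ Bad k := mem_iInter₂.1 hνW k hk
    have hjW : (V k j ∩ W k).Nonempty := by
      obtain ⟨w, hw1, hw2⟩ := mem_closure_iff.1 hj (interior (W k)) isOpen_interior hν_mem.1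
      exact ⟨w, hw2, interior_subset hw1⟩
    have hjν0 : ν0 ∈ closure (V k j) := by
      by_contra hnot
      exact hν_mem.2 (mem_biUnion (⟨hjW, hnot⟩ : j ∈ {j | _ ∧ _}) hj)
    exact mem_biUnion hjν0 hzT
  calc C ν ⊆ ⋂ k ∈ Finset.range N, D k ν := fun z hz =>
        mem_iInter₂.2 fun k _ => mem_iInter.1 hz k
  _ ⊆ ⋂ k ∈ Finset.range N, D k ν0 := iInter₂_mono hDsub
  _ ⊆ U := hNsub
end

section
/- Let X be a Polish space, ε ∈ (0,1), and let Z ⊆ P(X) be any subset of the space of Borel probability measures with the weak topology. Then there exists an usco mapping φ : Z → C(X) with μ(X \ φ(μ)) < ε for all μ ∈ Z; in particular, for every compact T ⊆ Z the set ⋃{φ(μ) : μ ∈ T} is a compact subset K of X satisfying μ(X \ K) < ε for all μ ∈ T. -/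
open MeasureTheory Set TopologicalSpace
open scoped ENNReal NNReal

open Metric Filter
open scoped Topology

lemma isOpen_probabilityMeasure_measure_gt {X : Type*} [MetricSpace X] [MeasurableSpace X]
    [BorelSpace X] {G : Set X} (hG : IsOpen G) (c : ℝ≥0∞) :
    IsOpen {μ : ProbabilityMeasure X | c < (μ : Measure X) G} := by
  rw [isOpen_iff_mem_nhds]
  intro μ hμ
  have h := MeasureTheory.ProbabilityMeasure.le_liminf_measure_open_of_tendsto
    (μs := id) (L := 𝓝 μ) tendsto_id hG
  exact Filter.eventually_lt_of_lt_liminf (lt_of_lt_of_le hμ h)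

theorem aux {X : Type*} [MetricSpace X] [CompleteSpace X] [SecondCountableTopology X]
    [Nonempty X] [MeasurableSpace X] [BorelSpace X] (ε : ℝ≥0∞) (h0 : 0 < ε) (h1 : ε < 1)
    (Z : Set (ProbabilityMeasure X)) :
    ∃ φ : Z → NEC X,
      (∀ U : Set X, IsOpen U → IsOpen {μ : Z | (φ μ).1 ⊆ U}) ∧
      (∀ μ : Z, ((μ : ProbabilityMeasure X) : Measure X) (φ μ).1ᶜ < ε) ∧
      ∀ T : Set Z, IsCompact T →
        IsCompact (⋃ μ ∈ T, (φ μ).1) ∧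
          ∀ μ ∈ T, ((μ : ProbabilityMeasure X) : Measure X) (⋃ ν ∈ T, (φ ν).1)ᶜ < ε := by
  classical
  have hεtop : ε ≠ ∞ := ne_top_of_lt h1
  obtain ⟨x, hx⟩ := TopologicalSpace.exists_dense_seq X
  set δ : ℕ → ℝ≥0∞ := fun n => ε / 2 * 2⁻¹ ^ (n + 1) with hδdef
  have hhalfpos : 0 < ε / 2 := ENNReal.div_pos h0.ne' (by norm_num)
  have hδpos : ∀ n, 0 < δ n := by
    intro n
    exact ENNReal.mul_pos hhalfpos.ne' (ENNReal.pow_pos (by norm_num) _).ne'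
  have hδtop : ∀ n, δ n ≠ ∞ := by
    intro n
    refine ENNReal.mul_ne_top ?_ ?_
    · exact (ENNReal.div_lt_top hεtop (by norm_num)).ne
    · exact (ENNReal.pow_ne_top (by norm_num))
  have hδle : ∀ n, δ n ≤ 1 := by
    intro n
    have h2 : (2:ℝ≥0∞)⁻¹ ^ (n+1) ≤ 1 := pow_le_one' (by simp [ENNReal.inv_le_one]) _
    calc δ n ≤ ε / 2 * 1 := mul_le_mul_right h2 _
    _ = ε / 2 := mul_one _
    _ ≤ ε := ENNReal.half_le_self
    _ ≤ 1 := h1.le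
  have hδsum : ∑' n, δ n = ε / 2 := by
    rw [hδdef, ENNReal.tsum_mul_left, ENNReal.tsum_geometric_add_one,
      ENNReal.one_sub_inv_two, inv_inv]
    rw [ENNReal.inv_mul_cancel (by norm_num) (by norm_num), mul_one]
  have hhalflt : ε / 2 < ε := ENNReal.half_lt_self h0.ne' hεtop
  -- the basic open sets
  set G : ℕ → ℕ → Set X := fun n m => ⋃ i ∈ Set.Iio m, ball (x i) (1 / (n + 1)) with hGdef
  have hrpos : ∀ n : ℕ, (0:ℝ) < 1 / (n + 1) := by
    intro n; positivity
  have hGopen : ∀ n m, IsOpen (G n m) :=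
    fun n m => isOpen_biUnion fun i _ => isOpen_ball
  have hGmono : ∀ n, Monotone (G n) := by
    intro n k l hkl
    exact Set.biUnion_subset_biUnion_left (Set.Iio_subset_Iio hkl)
  have hGunion : ∀ n, ⋃ m, G n m = univ := by
    intro n
    refine Set.eq_univ_of_forall fun y => ?_
    obtain ⟨i, hi⟩ := Metric.denseRange_iff.mp hx y _ (hrpos n)
    refine Set.mem_iUnion.2 ⟨i + 1, Set.mem_biUnion (Set.mem_Iio.2 (Nat.lt_succ_self i)) ?_⟩
    simpa [mem_ball] using hi
  set P : ℕ → ℕ → ProbabilityMeasure X → Prop :=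
    fun n m μ => 1 - δ n < (μ : Measure X) (G n m) with hPdef
  have hPex : ∀ (μ : ProbabilityMeasure X) (n : ℕ), ∃ m, P n m μ := by
    intro μ n
    have ht : Tendsto (fun m => (μ : Measure X) (G n m)) atTop
        (𝓝 ((μ : Measure X) (⋃ m, G n m))) :=
      tendsto_measure_iUnion_atTop (hGmono n)
    rw [hGunion n, measure_univ] at ht
    have hlt : 1 - δ n < 1 := ENNReal.sub_lt_self ENNReal.one_ne_top one_ne_zero (hδpos n).ne'
    exact (ht.eventually_const_lt hlt).exists
  set mIdx : ProbabilityMeasure X → ℕ → ℕ := fun μ n => Nat.find (hPex μ n) with hmdef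
  have hm : ∀ μ n, P n (mIdx μ n) μ := fun μ n => Nat.find_spec (hPex μ n)
  have hmle : ∀ μ n k, P n k μ → mIdx μ n ≤ k := fun μ n k h => Nat.find_le h
  have hmP : ∀ μ n k, mIdx μ n ≤ k → P n k μ := by
    intro μ n k h
    exact lt_of_lt_of_le (hm μ n) (measure_mono (hGmono n h))
  set F : ℕ → ProbabilityMeasure X → Set X :=
    fun n μ => closure (G n (mIdx μ n)) with hFdef
  set φ₀ : ProbabilityMeasure X → Set X := fun μ => ⋂ n, F n μ with hφdef
  have hφclosed : ∀ μ, IsClosed (φ₀ μ) :=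
    fun μ => isClosed_iInter fun n => isClosed_closure
  have hGsub : ∀ n m, closure (G n m) ⊆ ⋃ i ∈ Set.Iio m, closedBall (x i) (1 / (n + 1)) := by
    intro n m
    refine closure_minimal (Set.iUnion₂_mono fun i _ => ball_subset_closedBall) ?_
    exact (Set.finite_Iio m).isClosed_biUnion fun i _ => Metric.isClosed_closedBall
  -- measure bound
  have hcompl : ∀ μ : ProbabilityMeasure X, (μ : Measure X) (φ₀ μ)ᶜ ≤ ε / 2 := by
    intro μ
    have h1' : (φ₀ μ)ᶜ = ⋃ n, (F n μ)ᶜ := by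
      rw [hφdef]; simp [Set.compl_iInter]
    rw [h1']
    refine le_trans (measure_iUnion_le _) ?_
    rw [← hδsum]
    refine ENNReal.tsum_le_tsum fun n => ?_
    have hsub : (F n μ)ᶜ ⊆ (G n (mIdx μ n))ᶜ := Set.compl_subset_compl.2 subset_closure
    refine le_trans (measure_mono hsub) ?_
    rw [prob_compl_eq_one_sub (hGopen n (mIdx μ n)).measurableSet]
    rw [tsub_le_iff_right]
    have := hm μ n
    rw [hPdef] at this
    have h2 : 1 < (μ : Measure X) (G n (mIdx μ n)) + δ n :=
      (ENNReal.sub_lt_iff_lt_right (hδtop n) (hδle n)).1 this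
    calc (1:ℝ≥0∞) ≤ (μ : Measure X) (G n (mIdx μ n)) + δ n := h2.le
    _ = δ n + (μ : Measure X) (G n (mIdx μ n)) := add_comm _ _
  have hne : ∀ μ : ProbabilityMeasure X, (φ₀ μ).Nonempty := by
    intro μ
    rw [Set.nonempty_iff_ne_empty]
    intro h
    have := hcompl μ
    rw [h, Set.compl_empty, measure_univ] at this
    exact absurd (this.trans_lt (hhalflt.trans h1)) (lt_irrefl _)
  have hφsubF : ∀ μ n, φ₀ μ ⊆ F n μ := fun μ n => Set.iInter_subset _ n
  have hcpt : ∀ μ : ProbabilityMeasure X, IsCompact (φ₀ μ) := by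
    intro μ
    refine TotallyBounded.isCompact_of_isClosed (Metric.totallyBounded_iff.2 ?_) (hφclosed μ)
    intro r hr
    obtain ⟨n, hn⟩ := exists_nat_one_div_lt hr
    refine ⟨x '' Set.Iio (mIdx μ n), (Set.finite_Iio _).image x, ?_⟩
    refine ((hφsubF μ n).trans (hGsub n _)).trans ?_
    refine Set.iUnion₂_subset fun i hi => ?_
    refine subset_trans (closedBall_subset_ball hn) ?_
    exact Set.subset_biUnion_of_mem (u := fun y => ball y r) (Set.mem_image_of_mem x hi)
  -- the key finite-stage lemma
  have key : ∀ (μ : ProbabilityMeasure X) (U : Set X), IsOpen U → φ₀ μ ⊆ U →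
      ∃ N, (⋂ n ∈ Set.Iio N, F n μ) ⊆ U := by
    intro μ U hU hsub
    by_contra h
    push_neg at h
    have h' : ∀ N, ∃ y, y ∈ (⋂ n ∈ Set.Iio N, F n μ) ∧ y ∉ U := by
      intro N
      obtain ⟨y, hy1, hy2⟩ := Set.not_subset.1 (h N)
      exact ⟨y, hy1, hy2⟩
    choose y hy1 hy2 using h'
    have hyF : ∀ n N, n < N → y N ∈ F n μ := by
      intro n N hnN
      exact Set.mem_iInter₂.1 (hy1 N) n hnN
    set 𝒰 : Ultrafilter X := Ultrafilter.of (Filter.map y atTop) with h𝒰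
    have hle : ∀ s ∈ Filter.map y atTop, s ∈ 𝒰 := fun s hs => Ultrafilter.of_le _ hs
    have hFmem : ∀ n, F n μ ∈ 𝒰 := by
      intro n
      refine hle _ ?_
      rw [mem_map]
      exact Filter.eventually_atTop.2 ⟨n + 1, fun N hN => hyF n N (Nat.lt_of_succ_le hN)⟩
    have hUc : Uᶜ ∈ 𝒰 := hle _ (Filter.eventually_atTop.2 ⟨0, fun N _ => hy2 N⟩)
    have hCauchy : Cauchy (𝒰 : Filter X) := by
      rw [Metric.cauchy_iff]
      refine ⟨𝒰.neBot, fun r hr => ?_⟩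
      obtain ⟨n, hn⟩ := exists_nat_one_div_lt (half_pos hr)
      have hsub' : F n μ ⊆ ⋃ i ∈ Set.Iio (mIdx μ n), closedBall (x i) (1 / (n + 1)) :=
        hGsub n _
      have hmem : (⋃ i ∈ Set.Iio (mIdx μ n), closedBall (x i) (1 / (n + 1))) ∈ 𝒰 :=
        mem_of_superset (hFmem n) hsub'
      obtain ⟨i, _, hi⟩ := (Ultrafilter.finite_biUnion_mem_iff (Set.finite_Iio _)).1 hmem
      refine ⟨closedBall (x i) (1 / (n + 1)), hi, fun a ha b hb => ?_⟩
      calc dist a b ≤ dist a (x i) + dist (x i) b := dist_triangle _ _ _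
      _ ≤ 1 / (n + 1) + 1 / (n + 1) := by
          refine add_le_add (mem_closedBall.1 ha) ?_
          rw [dist_comm]; exact mem_closedBall.1 hb
      _ < r / 2 + r / 2 := add_lt_add hn hn
      _ = r := add_halves r
    obtain ⟨z, hz⟩ := CompleteSpace.complete hCauchy
    have hcluster : ∀ s : Set X, s ∈ 𝒰 → IsClosed s → z ∈ s := by
      intro s hs hscl
      rw [← hscl.closure_eq, mem_closure_iff_clusterPt]
      exact Filter.neBot_of_le (le_inf hz (le_principal_iff.2 hs))
    have hzφ : z ∈ φ₀ μ := Set.mem_iInter.2 fun n => hcluster _ (hFmem n) isClosed_closure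
    exact hcluster Uᶜ hUc hU.isClosed_compl (hsub hzφ)
  -- upper semicontinuity
  have husc : ∀ U : Set X, IsOpen U → IsOpen {μ : Z | φ₀ μ.1 ⊆ U} := by
    intro U hU
    rw [isOpen_iff_mem_nhds]
    intro μ₀ hμ₀
    obtain ⟨N, hN⟩ := key μ₀.1 U hU hμ₀
    set W : Set (ProbabilityMeasure X) :=
      ⋂ n ∈ Set.Iio N, {ν : ProbabilityMeasure X | 1 - δ n < (ν : Measure X) (G n (mIdx μ₀.1 n))}
      with hWdef
    have hWopen : IsOpen W := by
      refine (Set.finite_Iio N).isOpen_biInter fun n _ => ?_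
      exact isOpen_probabilityMeasure_measure_gt (hGopen n _) _
    have hμ₀W : μ₀.1 ∈ W := Set.mem_iInter₂.2 fun n _ => hm μ₀.1 n
    rw [mem_nhds_subtype]
    refine ⟨W, hWopen.mem_nhds hμ₀W, fun μ hμ => ?_⟩
    have hFF : ∀ n ∈ Set.Iio N, F n μ.1 ⊆ F n μ₀.1 := by
      intro n hn
      have hP : P n (mIdx μ₀.1 n) μ.1 := Set.mem_iInter₂.1 hμ n hn
      exact closure_mono (hGmono n (hmle μ.1 n _ hP))
    refine Set.mem_setOf.2 (subset_trans ?_ hN)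
    exact Set.subset_iInter₂ fun n hn => (hφsubF μ.1 n).trans (hFF n hn)
  -- uniform bound on compact sets
  have hbound : ∀ T : Set Z, IsCompact T → ∀ n : ℕ, ∃ M : ℕ, ∀ μ ∈ T, mIdx μ.1 n ≤ M := by
    intro T hT n
    have hcover : T ⊆ ⋃ k : ℕ, Subtype.val ⁻¹'
        {ν : ProbabilityMeasure X | 1 - δ n < (ν : Measure X) (G n k)} := by
      intro μ _
      exact Set.mem_iUnion.2 ⟨mIdx μ.1 n, hm μ.1 n⟩
    obtain ⟨s, hs⟩ := hT.elim_finite_subcover _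
      (fun k => (isOpen_probabilityMeasure_measure_gt (hGopen n k) _).preimage
        continuous_subtype_val) hcover
    refine ⟨s.sup id, fun μ hμ => ?_⟩
    obtain ⟨k, hk, hμk⟩ := Set.mem_iUnion₂.1 (hs hμ)
    exact le_trans (hmle μ.1 n k hμk) (Finset.le_sup (f := id) hk)
  -- assemble
  refine ⟨fun μ => ⟨φ₀ μ.1, hcpt μ.1, hne μ.1⟩, husc, ?_, ?_⟩
  · exact fun μ => lt_of_le_of_lt (hcompl μ.1) hhalflt
  · intro T hT
    have hYsub : ∀ μ ∈ T, φ₀ μ.1 ⊆ ⋃ ν ∈ T, φ₀ ν.1 := by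
      intro μ hμ
      exact Set.subset_biUnion_of_mem (u := fun ν : Z => φ₀ ν.1) hμ
    constructor
    · -- compactness of the union
      refine TotallyBounded.isCompact_of_isClosed ?_ ?_
      · rw [Metric.totallyBounded_iff]
        intro r hr
        obtain ⟨n, hn⟩ := exists_nat_one_div_lt hr
        obtain ⟨M, hM⟩ := hbound T hT n
        refine ⟨x '' Set.Iio M, (Set.finite_Iio _).image x, ?_⟩
        refine Set.iUnion₂_subset fun μ hμ => ?_
        have h1' : φ₀ μ.1 ⊆ closure (G n M) :=
          (hφsubF μ.1 n).trans (closure_mono (hGmono n (hM μ hμ)))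
        refine (h1'.trans (hGsub n M)).trans ?_
        refine Set.iUnion₂_subset fun i hi => ?_
        exact (closedBall_subset_ball hn).trans
          (Set.subset_biUnion_of_mem (u := fun y => ball y r) (Set.mem_image_of_mem x hi))
      · -- closedness of the union
        rw [← isOpen_compl_iff, isOpen_iff_mem_nhds]
        intro p hp
        have hpnot : ∀ μ ∈ T, p ∉ φ₀ μ.1 := by
          intro μ hμ hmem
          exact hp (Set.mem_biUnion hμ hmem)
        have hinf : ∀ μ ∈ T, 0 < infDist p (φ₀ μ.1) := by
          intro μ hμ
          exact ((hφclosed _).notMem_iff_infDist_pos (hne _)).1 (hpnot μ hμ)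
        have hcover : T ⊆ ⋃ μ ∈ T,
            {ν : Z | φ₀ ν.1 ⊆ thickening (infDist p (φ₀ μ.1) / 2) (φ₀ μ.1)} := by
          intro μ hμ
          refine Set.mem_biUnion hμ ?_
          exact Set.mem_setOf.2 (self_subset_thickening (half_pos (hinf μ hμ)) _)
        obtain ⟨b, hbT, hbfin, hbcov⟩ := hT.elim_finite_subcover_image
          (fun μ _ => husc _ isOpen_thickening) hcover
        set V : Set X := ⋂ μ ∈ b, ball p (infDist p (φ₀ μ.1) / 2) with hVdef
        have hVopen : IsOpen V := hbfin.isOpen_biInter fun μ _ => isOpen_ball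
        have hpV : p ∈ V :=
          Set.mem_iInter₂.2 fun μ hμ => mem_ball_self (half_pos (hinf μ (hbT hμ)))
        refine Filter.mem_of_superset (hVopen.mem_nhds hpV) ?_
        intro q hq hqY
        obtain ⟨ν, hνT, hqν⟩ := Set.mem_iUnion₂.1 hqY
        obtain ⟨μ, hμb, hνμ⟩ := Set.mem_iUnion₂.1 (hbcov hνT)
        have h1' : q ∈ thickening (infDist p (φ₀ μ.1) / 2) (φ₀ μ.1) :=
          (Set.mem_setOf.1 hνμ) hqν
        rw [mem_thickening_iff_infDist_lt (hne _)] at h1'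
        have h2' : dist p q < infDist p (φ₀ μ.1) / 2 :=
          mem_ball'.1 (Set.mem_iInter₂.1 hq μ hμb)
        have h3' : infDist p (φ₀ μ.1) < infDist p (φ₀ μ.1) :=
          calc infDist p (φ₀ μ.1)
              ≤ infDist q (φ₀ μ.1) + dist p q := infDist_le_infDist_add_dist
            _ < infDist p (φ₀ μ.1) / 2 + infDist p (φ₀ μ.1) / 2 :=
                add_lt_add h1' h2'
            _ = infDist p (φ₀ μ.1) := add_halves _
        exact absurd h3' (lt_irrefl _)
    · intro μ hμ
      have hsub' : (⋃ ν ∈ T, φ₀ ν.1)ᶜ ⊆ (φ₀ μ.1)ᶜ :=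
        Set.compl_subset_compl.2 (hYsub μ hμ)
      exact lt_of_le_of_lt (le_trans (measure_mono hsub') (hcompl μ.1)) hhalflt

theorem stmt18 {X : Type*} [TopologicalSpace X] [PolishSpace X] [MeasurableSpace X]
    [BorelSpace X] (ε : ℝ≥0∞) (h0 : 0 < ε) (h1 : ε < 1)
    (Z : Set (ProbabilityMeasure X)) :
    ∃ φ : Z → NEC X,
      (∀ U : Set X, IsOpen U → IsOpen {μ : Z | (φ μ).1 ⊆ U}) ∧
      (∀ μ : Z, ((μ : ProbabilityMeasure X) : Measure X) (φ μ).1ᶜ < ε) ∧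
      ∀ T : Set Z, IsCompact T →
        IsCompact (⋃ μ ∈ T, (φ μ).1) ∧
          ∀ μ ∈ T, ((μ : ProbabilityMeasure X) : Measure X) (⋃ ν ∈ T, (φ ν).1)ᶜ < ε := by
  rcases isEmpty_or_nonempty X with hX | hX
  · haveI : IsEmpty (ProbabilityMeasure X) := by
      refine ⟨fun μ => ?_⟩
      have h := (measure_univ (μ := (μ : Measure X)))
      rw [Set.univ_eq_empty_iff.2 hX, measure_empty] at h
      exact one_ne_zero h.symm
    haveI : IsEmpty Z := ⟨fun μ => IsEmpty.false μ.1⟩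
    refine ⟨fun μ => isEmptyElim μ, ?_, fun μ => isEmptyElim μ, ?_⟩
    · intro U hU
      have : {μ : Z | (isEmptyElim μ : NEC X).1 ⊆ U} = ∅ := Set.eq_empty_of_isEmpty _
      rw [this]; exact isOpen_empty
    · intro T hT
      have hTe : T = ∅ := Set.eq_empty_of_isEmpty T
      subst hTe
      simp
  · letI := upgradeIsCompletelyMetrizable X
    exact aux ε h0 h1 Z
end
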